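/- Let S be a finitely generated semigroup acting faithfully on a set X, and suppose there exists M ∈ ℕ such that every orbit S·x = {s·x : s ∈ S} satisfies |S·x| ≤ M. Then S is finite. -/

import Mathlib

/-- a finitely generated semigroup acting faithfully on a set with all
orbits of size at most `M` is finite. -/
theorem finite_of_faithful_bounded_orbits {S X : Type*} [Semigroup S] [SMul S X]
    (hact : ∀ (s t : S) (x : X), (s * t) • x = s • t • x)
    (hfaithful : ∀ s t : S, s ≠ t → ∃ x : X, s • x ≠ t • x)
    (hfg : ∃ F : Set S, F.Finite ∧ Subsemigroup.closure F = ⊤)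
    (M : ℕ) (horb : ∀ x : X, (Set.range fun s : S => s • x).encard ≤ M) :
    Finite S := by
  classical
  obtain ⟨F, hFfin, hFtop⟩ := hfg
  haveI := hFfin.to_subtype
  -- the cyclic sub-act generated by x
  set Y : X → Set X := fun x => insert x (Set.range fun s : S => s • x) with hYdef
  have hxY : ∀ x : X, x ∈ Y x := fun x => Set.mem_insert _ _
  have hsY : ∀ (s : S) (x : X), s • x ∈ Y x := fun s x => Set.mem_insert_of_mem _ ⟨s, rfl⟩
  have hclosed : ∀ (s : S) (x y : X), y ∈ Y x → s • y ∈ Y x := by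
    intro s x y hy
    rcases hy with rfl | ⟨t, rfl⟩
    · exact hsY s y
    · exact Set.mem_insert_of_mem _ ⟨s * t, hact s t x⟩
  have hYfin : ∀ x, (Y x).Finite :=
    fun x => (Set.finite_of_encard_le_coe (horb x)).insert x
  haveI : ∀ x, Fintype (Y x) := fun x => (hYfin x).fintype
  have hYcard : ∀ x, Fintype.card (Y x) ≤ M + 1 := by
    intro x
    have h1 : (Y x).encard ≤ (M : ℕ∞) + 1 :=
      le_trans (Set.encard_insert_le _ _) (by gcongr; exact horb x)
    have h2 : (Y x).encard = (Fintype.card (Y x) : ℕ∞) := by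
      rw [Set.encard_eq_coe_toFinset_card, Set.toFinset_card]
    rw [h2] at h1
    exact_mod_cast h1
  -- embed each Y x into Fin (M+1), with a retraction
  have hemb : ∀ x, ∃ e : Y x → Fin (M + 1), Function.Injective e := by
    intro x
    obtain ⟨e⟩ := Function.Embedding.nonempty_of_card_le
      (α := Y x) (β := Fin (M + 1)) (by rw [Fintype.card_fin]; exact hYcard x)
    exact ⟨e, e.injective⟩
  choose e he using hemb
  haveI : ∀ x, Nonempty (Y x) := fun x => ⟨⟨x, hxY x⟩⟩
  let r : ∀ x, Fin (M + 1) → Y x := fun x => Function.invFun (e x)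
  have hre : ∀ x, Function.LeftInverse (r x) (e x) :=
    fun x => Function.leftInverse_invFun (he x)
  -- the "restricted action" homomorphism into a product of finite semigroups
  let A := Function.End (Fin (M + 1))
  let act : S → ∀ x, Y x → Y x := fun s x y => ⟨s • (y : X), hclosed s x y y.2⟩
  let Φ : S → X → A := fun s x i => e x (act s x (r x i))
  have hΦmul : ∀ (s t : S) (x : X), Φ (s * t) x = Φ s x * Φ t x := by
    intro s t x
    funext i
    show e x (act (s * t) x (r x i)) = e x (act s x (r x (e x (act t x (r x i)))))
    rw [hre x]
    congr 1
    exact Subtype.ext (hact s t _)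
  have hΦinj : Function.Injective Φ := by
    intro s t h
    by_contra hne
    obtain ⟨x, hx⟩ := hfaithful s t hne
    have h1 : Φ s x (e x ⟨x, hxY x⟩) = Φ t x (e x ⟨x, hxY x⟩) := by rw [h]
    apply hx
    have h3 := hre x ⟨x, hxY x⟩
    have h2 : e x (act s x ⟨x, hxY x⟩) = e x (act t x ⟨x, hxY x⟩) := by
      simpa only [Φ, h3] using h1
    exact congrArg Subtype.val (he x h2)
  -- surjection from the free semigroup
  let P : FreeSemigroup F →ₙ* S := FreeSemigroup.lift (fun f => (f : S))
  have hPsurj : Function.Surjective P := by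
    have hle : Subsemigroup.closure F ≤ MulHom.srange P :=
      Subsemigroup.closure_le.mpr (fun f hf => ⟨FreeSemigroup.of ⟨f, hf⟩, FreeSemigroup.lift_of _ _⟩)
    intro s
    have : s ∈ MulHom.srange P := hle (hFtop ▸ Subsemigroup.mem_top s)
    exact this
  -- evaluation homomorphism
  let E : FreeSemigroup F →ₙ* ((F → A) → A) := FreeSemigroup.lift (fun f b => b f)
  have key : ∀ (w : FreeSemigroup F) (x : X), Φ (P w) x = E w (fun f => Φ (f : S) x) := by
    intro w x
    induction w using FreeSemigroup.recOnMul with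
    | ih1 f => simp [P, E, FreeSemigroup.lift_of]
    | ih2 w₁ w₂ ih₁ ih₂ =>
      rw [map_mul, map_mul, hΦmul, ih₁, ih₂]
      rfl
  -- injection of S into a finite type
  let ψ : S → ((F → A) → A) := fun s => E (Function.surjInv hPsurj s)
  have hψinj : Function.Injective ψ := by
    intro s t h
    apply hΦinj
    funext x
    have k1 := key (Function.surjInv hPsurj s) x
    have k2 := key (Function.surjInv hPsurj t) x
    rw [Function.surjInv_eq hPsurj s] at k1
    rw [Function.surjInv_eq hPsurj t] at k2
    exact k1.trans ((congrFun h (fun f => Φ (f : S) x)).trans k2.symm)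
  haveI : Finite A := inferInstanceAs (Finite (Fin (M + 1) → Fin (M + 1)))
  exact Finite.of_injective ψ hψinj
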